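/- For every positive integer n, the following identity holds in ℤ: 2·∑_{i=0}^{⌊n/2⌋} ∑_{j=0}^{⌊n/2⌋} C(n, i+j) · C(n, h(i,j)) equals 2^{2n−1} if n is even, and 2^{2n−1} − C(2n, n) if n is odd, where in the arguments of C the indices i, j are cast to ℤ. -/

import Mathlib

/-- The extended binomial coefficient `C n m` for `n : ℕ` and `m : ℤ`: equal to
`n.choose m.toNat` when `0 ≤ m ≤ n`, and `0` otherwise. -/
def C (n : ℕ) (m : ℤ) : ℤ :=
  if 0 ≤ m ∧ m ≤ (n : ℤ) then (n.choose m.toNat : ℤ) else 0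

/-- `h i j = i - j - 1` if `j ≤ i`, and `j - i - 1` if `i < j`. -/
def h (i j : ℤ) : ℤ := if j ≤ i then i - j - 1 else j - i - 1

lemma C_natCast (n x : ℕ) : C n (x : ℤ) = (n.choose x : ℤ) := by
  unfold C
  split
  case isTrue hc => simp
  case isFalse hc =>
    push_neg at hc
    have : n < x := by
      have := hc (by positivity)
      exact_mod_cast this
    simp [Nat.choose_eq_zero_of_lt this]

lemma h_nat (i j : ℕ) (hji : j < i) : h i j = ((i - j - 1 : ℕ) : ℤ) := by
  unfold h
  rw [if_pos (by exact_mod_cast hji.le)]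
  omega

lemma h_symm (i j : ℤ) : h i j = h j i := by
  unfold h; split <;> split <;> omega

lemma C_diag (n : ℕ) (i : ℤ) : C n (h i i) = 0 := by
  have : h i i = -1 := by unfold h; simp
  rw [this]; unfold C; simp

lemma oddsum (N : ℕ) (h0 : N ≠ 0) :
    ∑ k ∈ (Finset.range (N+1)).filter (fun k => k % 2 = 1), (N.choose k : ℤ)
      = 2 ^ (N - 1) := by
  have h1 : ∑ k ∈ Finset.range (N+1), (N.choose k : ℤ) = 2 ^ N := by
    exact_mod_cast congrArg (Nat.cast : ℕ → ℤ) (Nat.sum_range_choose N)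
  have h2 := Int.alternating_sum_range_choose_of_ne h0
  have h3 : ∑ k ∈ Finset.range (N+1), ((1 : ℤ) - (-1)^k) * N.choose k = 2 ^ N := by
    rw [Finset.sum_congr rfl (fun k _ => by ring_nf : ∀ k ∈ Finset.range (N+1),
      ((1 : ℤ) - (-1)^k) * N.choose k = (N.choose k : ℤ) - (-1)^k * N.choose k)]
    rw [Finset.sum_sub_distrib, h1, h2, sub_zero]
  have h4 : ∑ k ∈ Finset.range (N+1), ((1 : ℤ) - (-1)^k) * N.choose k
      = 2 * ∑ k ∈ (Finset.range (N+1)).filter (fun k => k % 2 = 1), (N.choose k : ℤ) := by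
    rw [Finset.mul_sum, Finset.sum_filter]
    refine Finset.sum_congr rfl fun k _ => ?_
    rcases Nat.even_or_odd k with he | ho
    · rw [he.neg_one_pow]
      simp [Nat.even_iff.mp he]
    · rw [ho.neg_one_pow]
      simp [Nat.odd_iff.mp ho]
      try ring
  have h5 : 2 * ∑ k ∈ (Finset.range (N+1)).filter (fun k => k % 2 = 1), (N.choose k : ℤ) = 2 ^ N := by
    rw [← h4, h3]
  have : (2:ℤ) ^ N = 2 * 2 ^ (N-1) := by
    rw [← pow_succ']
    congr 1
    omega
  omega

lemma reflsum (n : ℕ) :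
    ∑ k ∈ (Finset.range (2*n+1)).filter (fun k => k % 2 = 1 ∧ n < k), ((2*n).choose k : ℤ)
      = ∑ k ∈ (Finset.range (2*n+1)).filter (fun k => k % 2 = 1 ∧ k < n), ((2*n).choose k : ℤ) := by
  refine Finset.sum_nbij' (i := fun k => 2*n - k) (j := fun k => 2*n - k) ?_ ?_ ?_ ?_ ?_
  · intro a ha
    simp only [Finset.mem_filter, Finset.mem_range] at ha ⊢
    omega
  · intro a ha
    simp only [Finset.mem_filter, Finset.mem_range] at ha ⊢
    omega
  · intro a ha
    simp only [Finset.mem_filter, Finset.mem_range] at ha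
    show 2*n - (2*n - a) = a
    omega
  · intro a ha
    simp only [Finset.mem_filter, Finset.mem_range] at ha
    show 2*n - (2*n - a) = a
    omega
  · intro a ha
    simp only [Finset.mem_filter, Finset.mem_range] at ha
    rw [Nat.choose_symm (by omega)]

lemma keysum (n : ℕ) (hn : 1 ≤ n) :
    2 * ∑ k ∈ (Finset.range (2*(n/2))).filter (fun k => k % 2 = 1), ((2*n).choose k : ℤ)
      + (if Even n then 0 else ((2*n).choose n : ℤ)) = 2 ^ (2*n-1) := by
  have h0 := oddsum (2*n) (by omega)
  have hsplit : ∑ k ∈ (Finset.range (2*n+1)).filter (fun k => k % 2 = 1), ((2*n).choose k : ℤ)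
      = ∑ k ∈ (Finset.range (2*n+1)).filter (fun k => k % 2 = 1 ∧ k < n), ((2*n).choose k : ℤ)
      + ∑ k ∈ (Finset.range (2*n+1)).filter (fun k => k % 2 = 1 ∧ k = n), ((2*n).choose k : ℤ)
      + ∑ k ∈ (Finset.range (2*n+1)).filter (fun k => k % 2 = 1 ∧ n < k), ((2*n).choose k : ℤ) := by
    rw [Finset.sum_filter, Finset.sum_filter, Finset.sum_filter, Finset.sum_filter,
      ← Finset.sum_add_distrib, ← Finset.sum_add_distrib]
    refine Finset.sum_congr rfl fun k _ => ?_
    split_ifs <;> simp_all <;> omega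
  have hA : ∑ k ∈ (Finset.range (2*n+1)).filter (fun k => k % 2 = 1 ∧ k < n), ((2*n).choose k : ℤ)
      = ∑ k ∈ (Finset.range (2*(n/2))).filter (fun k => k % 2 = 1), ((2*n).choose k : ℤ) := by
    refine Finset.sum_congr ?_ fun _ _ => rfl
    ext k
    simp only [Finset.mem_filter, Finset.mem_range]
    omega
  have hM : ∑ k ∈ (Finset.range (2*n+1)).filter (fun k => k % 2 = 1 ∧ k = n), ((2*n).choose k : ℤ)
      = (if Even n then 0 else ((2*n).choose n : ℤ)) := by
    rcases Nat.even_or_odd n with he | ho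
    · rw [if_pos he]
      rw [Finset.sum_eq_zero]
      intro k hk
      simp only [Finset.mem_filter, Finset.mem_range] at hk
      exfalso
      rw [Nat.even_iff] at he
      omega
    · rw [if_neg (by simpa [Nat.odd_iff, Nat.even_iff] using Nat.odd_iff.mp ho)]
      have : (Finset.range (2*n+1)).filter (fun k => k % 2 = 1 ∧ k = n) = {n} := by
        ext k
        simp only [Finset.mem_filter, Finset.mem_range, Finset.mem_singleton]
        rw [Nat.odd_iff] at ho
        omega
      rw [this, Finset.sum_singleton]
  rw [hsplit, hA, hM, reflsum n, hA] at h0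
  have : 2*n - 1 + 1 = 2*n := by omega
  linarith
/-- Twice the double sum of `C n (i+j) * C n (h i j)` over `0 ≤ i, j ≤ ⌊n/2⌋`
equals `2^(2n-1)` for `n` even and `2^(2n-1) - C (2n) n` for `n` odd. -/
theorem sum_mixed_identity (n : ℕ) (hn : 1 ≤ n) :
    2 * ∑ i ∈ Finset.range (n / 2 + 1), ∑ j ∈ Finset.range (n / 2 + 1),
        C n ((i : ℤ) + j) * C n (h i j) =
      if Even n then (2 : ℤ) ^ (2 * n - 1)
      else (2 : ℤ) ^ (2 * n - 1) - C (2 * n) n := by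
  set m := n / 2 with hm
  set f : ℕ × ℕ → ℤ := fun p => C n ((p.1 : ℤ) + p.2) * C n (h p.1 p.2) with hf
  set sq : Finset (ℕ × ℕ) := Finset.range (m+1) ×ˢ Finset.range (m+1) with hsq
  have hT : ∑ i ∈ Finset.range (m + 1), ∑ j ∈ Finset.range (m + 1),
      C n ((i : ℤ) + j) * C n (h i j) = ∑ p ∈ sq, f p := by
    rw [hsq, Finset.sum_product]
  -- upper triangle
  set U : Finset (ℕ × ℕ) := sq.filter (fun p => p.2 < p.1) with hU
  -- step: sum over sq = 2 * sum over U
  have hdiag : ∑ p ∈ sq.filter (fun p => ¬ p.2 < p.1 ∧ ¬ p.1 < p.2), f p = 0 := by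
    refine Finset.sum_eq_zero fun p hp => ?_
    simp only [Finset.mem_filter] at hp
    have : p.1 = p.2 := by omega
    simp only [hf, this]
    rw [C_diag]
    ring
  have hlow : ∑ p ∈ sq.filter (fun p => ¬ p.2 < p.1 ∧ p.1 < p.2), f p = ∑ p ∈ U, f p := by
    refine Finset.sum_nbij' (i := fun p => (p.2, p.1)) (j := fun p => (p.2, p.1)) ?_ ?_ ?_ ?_ ?_
    · intro p hp
      simp only [hU, hsq, Finset.mem_filter, Finset.mem_product, Finset.mem_range] at hp ⊢
      omega
    · intro p hp
      simp only [hU, hsq, Finset.mem_filter, Finset.mem_product, Finset.mem_range] at hp ⊢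
      omega
    · intro p _; rfl
    · intro p _; rfl
    · intro p _
      simp only [hf]
      rw [h_symm]
      ring_nf
  have hsq2 : ∑ p ∈ sq, f p = 2 * ∑ p ∈ U, f p := by
    rw [← Finset.sum_filter_add_sum_filter_not sq (fun p => p.2 < p.1) f]
    rw [← Finset.sum_filter_add_sum_filter_not (sq.filter (fun p => ¬ p.2 < p.1))
      (fun p => p.1 < p.2) f]
    rw [Finset.filter_filter, Finset.filter_filter]
    linarith [hlow, hdiag]
  -- reindex upper triangle to (a, b) pairs
  set D : Finset (ℕ × ℕ) := (Finset.range (2*m) ×ˢ Finset.range (2*m)).filter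
      (fun p => (p.1 + p.2) % 2 = 1 ∧ p.1 + p.2 < 2*m) with hD
  set g : ℕ × ℕ → ℤ := fun p => (n.choose p.1 : ℤ) * (n.choose p.2 : ℤ) with hg
  have hUV : ∑ p ∈ U, f p = ∑ p ∈ D.filter (fun p => p.2 < p.1), g p := by
    refine Finset.sum_nbij' (i := fun p => (p.1 + p.2, p.1 - p.2 - 1))
      (j := fun q => ((q.1 + q.2 + 1)/2, (q.1 - q.2 - 1)/2)) ?_ ?_ ?_ ?_ ?_
    · intro p hp
      simp only [hU, hD, hsq, Finset.mem_filter, Finset.mem_product, Finset.mem_range] at hp ⊢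
      omega
    · intro q hq
      simp only [hU, hD, hsq, Finset.mem_filter, Finset.mem_product, Finset.mem_range] at hq ⊢
      omega
    · intro p hp
      simp only [hU, hsq, Finset.mem_filter, Finset.mem_product, Finset.mem_range] at hp
      show ((p.1 + p.2 + (p.1 - p.2 - 1) + 1)/2, (p.1 + p.2 - (p.1 - p.2 - 1) - 1)/2) = p
      obtain ⟨_, h2⟩ := hp
      ext <;> simp <;> omega
    · intro q hq
      simp only [hD, Finset.mem_filter, Finset.mem_product, Finset.mem_range] at hq
      show ((q.1+q.2+1)/2 + (q.1-q.2-1)/2, (q.1+q.2+1)/2 - (q.1-q.2-1)/2 - 1) = q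
      ext <;> simp <;> omega
    · intro p hp
      simp only [hU, hsq, Finset.mem_filter, Finset.mem_product, Finset.mem_range] at hp
      obtain ⟨_, h2⟩ := hp
      simp only [hf, hg]
      rw [h_nat p.1 p.2 h2, C_natCast, show ((p.1 : ℤ) + p.2) = ((p.1 + p.2 : ℕ) : ℤ) by push_cast; ring,
        C_natCast]
  have hDsplit : ∑ p ∈ D, g p = 2 * ∑ p ∈ D.filter (fun p => p.2 < p.1), g p := by
    rw [← Finset.sum_filter_add_sum_filter_not D (fun p => p.2 < p.1) g]
    have : ∑ p ∈ D.filter (fun p => ¬ p.2 < p.1), g p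
        = ∑ p ∈ D.filter (fun p => p.2 < p.1), g p := by
      refine Finset.sum_nbij' (i := fun p => (p.2, p.1)) (j := fun p => (p.2, p.1)) ?_ ?_ ?_ ?_ ?_
      · intro p hp
        simp only [hD, Finset.mem_filter, Finset.mem_product, Finset.mem_range] at hp ⊢
        omega
      · intro p hp
        simp only [hD, Finset.mem_filter, Finset.mem_product, Finset.mem_range] at hp ⊢
        omega
      · intro p _; rfl
      · intro p _; rfl
      · intro p _
        simp only [hg]
        ring
    rw [this]
    ring
  -- sum over D via antidiagonals
  have hDW : ∑ p ∈ D, g p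
      = ∑ k ∈ (Finset.range (2*m)).filter (fun k => k % 2 = 1), ((2*n).choose k : ℤ) := by
    have hbi : D = ((Finset.range (2*m)).filter (fun k => k % 2 = 1)).biUnion
        (fun k => Finset.HasAntidiagonal.antidiagonal k) := by
      ext p
      simp only [hD, Finset.mem_filter, Finset.mem_product, Finset.mem_range,
        Finset.mem_biUnion, Finset.HasAntidiagonal.mem_antidiagonal]
      constructor
      · rintro ⟨⟨_, _⟩, h1, h2⟩
        exact ⟨p.1 + p.2, ⟨h2, h1⟩, rfl⟩
      · rintro ⟨k, ⟨hk1, hk2⟩, hk3⟩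
        omega
    rw [hbi, Finset.sum_biUnion]
    · refine Finset.sum_congr rfl fun k hk => ?_
      have := Nat.add_choose_eq n n k
      rw [← two_mul] at this
      rw [this]
      push_cast
      rfl
    · intro a _ b _ hab
      simp only [Finset.disjoint_left, Finset.HasAntidiagonal.mem_antidiagonal]
      intro p hp1 hp2
      exact hab (hp1 ▸ hp2 ▸ rfl)
  have hkey := keysum n hn
  rw [hT, hsq2, hUV, ← hDsplit, hDW]
  rcases Nat.even_or_odd n with he | ho
  · rw [if_pos he]
    rw [if_pos he] at hkey
    linarith
  · rw [if_neg (Nat.not_even_iff_odd.mpr ho)]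
    rw [if_neg (Nat.not_even_iff_odd.mpr ho)] at hkey
    rw [show ((n : ℤ)) = ((n : ℕ) : ℤ) from rfl, C_natCast]
    linarith
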